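/- arXiv:1611.06493 — 3 statements merged into one kernel-verified Lean document; each statement's English description precedes it below -/
import Mathlib

section
/- Let p'(m|K) = (Π a_i^{m_i}/m_i!) / C_{N,K} for m ∈ P'_{N,K}. Then the mean number of clusters of size i, ⟨M_i⟩_{N,K} = Σ_{m ∈ P'_{N,K}} m_i · p'(m|K), equals a_i · C_{N-i,K-1} / C_{N,K}, provided C_{N,K} ≠ 0. -/
open Finset

/-- The set `P'_{N,K}`: multiplicity vectors `(m_1,…,m_N)` (encoded with a dummy
`m_0 = 0`) with `∑ i·m_i = N` and `∑ m_i = K`. -/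
def PNK (N K : ℕ) : Finset (Fin (N + 1) → ℕ) :=
  (Fintype.piFinset fun _ => Finset.range (N + 1)).filter
    fun m => m 0 = 0 ∧ (∑ i, i.1 * m i = N) ∧ (∑ i, m i = K)

/-- Normalization constant `C_{N,K} = ∑_{m ∈ P'_{N,K}} ∏ a_i^{m_i}/m_i!`. -/
noncomputable def CNK (a : ℕ → ℝ) (N K : ℕ) : ℝ :=
  ∑ m ∈ PNK N K, ∏ i, a i.1 ^ m i / (Nat.factorial (m i) : ℝ)

/-- Extension of a `Fin (N+1)`-indexed vector to `ℕ`, by zero. -/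
def extn (N : ℕ) (m : Fin (N + 1) → ℕ) : ℕ → ℕ :=
  fun j => if h : j < N + 1 then m ⟨j, h⟩ else 0

lemma extn_fin {N : ℕ} (m : Fin (N + 1) → ℕ) (j : Fin (N + 1)) :
    extn N m j.1 = m j := by
  simp [extn, j.2]

lemma extn_lt {N : ℕ} (m : Fin (N + 1) → ℕ) {j : ℕ} (h : j < N + 1) :
    extn N m j = m ⟨j, h⟩ := dif_pos h

lemma extn_ge {N : ℕ} (m : Fin (N + 1) → ℕ) {j : ℕ} (h : ¬ j < N + 1) :
    extn N m j = 0 := dif_neg h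

lemma sum_extn {M : Type*} [AddCommMonoid M] {N : ℕ} (m : Fin (N + 1) → ℕ)
    (F : ℕ → ℕ → M) :
    ∑ j : Fin (N + 1), F j.1 (m j) = ∑ j ∈ range (N + 1), F j (extn N m j) := by
  rw [← Fin.sum_univ_eq_sum_range (fun j => F j (extn N m j)) (N + 1)]
  exact Finset.sum_congr rfl fun j _ => by rw [extn_fin]

lemma prod_extn {M : Type*} [CommMonoid M] {N : ℕ} (m : Fin (N + 1) → ℕ)
    (F : ℕ → ℕ → M) :
    ∏ j : Fin (N + 1), F j.1 (m j) = ∏ j ∈ range (N + 1), F j (extn N m j) := by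
  rw [← Fin.prod_univ_eq_prod_range (fun j => F j (extn N m j)) (N + 1)]
  exact Finset.prod_congr rfl fun j _ => by rw [extn_fin]

lemma mem_PNK_iff {N K : ℕ} {m : Fin (N + 1) → ℕ} :
    m ∈ PNK N K ↔ (∀ j, m j ≤ N) ∧ m 0 = 0 ∧
      (∑ j ∈ range (N + 1), j * extn N m j = N) ∧
      (∑ j ∈ range (N + 1), extn N m j = K) := by
  rw [PNK, mem_filter, Fintype.mem_piFinset]
  rw [← sum_extn m (fun j c => j * c), ← sum_extn m (fun _ c => c)]
  simp only [mem_range, Nat.lt_succ_iff]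

lemma shift_sum (c : ℕ → ℕ) (N i : ℕ) (hi1 : 1 ≤ i) (hiN : i ≤ N) (M : ℕ → ℕ)
    (hMi : 1 ≤ M i) (hA : ∀ j, N - i + 1 ≤ j → j ≠ i → M j = 0)
    (hB : N - i < i → M i = 1) :
    ∑ j ∈ range (N - i + 1), c j * (M j - if j = i then 1 else 0) + c i
      = ∑ j ∈ range (N + 1), c j * M j := by
  have hsplit : ∑ j ∈ range (N + 1), c j * M j
      = ∑ j ∈ range (N - i + 1), c j * M j + ∑ j ∈ Ico (N - i + 1) (N + 1), c j * M j := by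
    simp only [range_eq_Ico]
    exact (Finset.sum_Ico_consecutive _ (Nat.zero_le _) (by omega)).symm
  by_cases hcase : i ≤ N - i
  · have htail : ∑ j ∈ Ico (N - i + 1) (N + 1), c j * M j = 0 :=
      Finset.sum_eq_zero fun j hj => by
        rw [hA j (mem_Ico.1 hj).1 (by have := (mem_Ico.1 hj).1; omega), Nat.mul_zero]
    rw [hsplit, htail, add_zero]
    have h1 : ∀ j ∈ range (N - i + 1),
        c j * (M j - if j = i then 1 else 0) + (if j = i then c j else 0) = c j * M j := by
      intro j hj
      by_cases h : j = i
      · subst h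
        obtain ⟨y, hy⟩ : ∃ y, M j = y + 1 := ⟨M j - 1, by omega⟩
        rw [hy, if_pos rfl, if_pos rfl, Nat.add_sub_cancel]
        ring
      · simp [h]
    have h2 := Finset.sum_congr rfl h1
    rw [Finset.sum_add_distrib, Finset.sum_ite_eq' (range (N - i + 1)) i c,
      if_pos (mem_range.2 (by omega))] at h2
    exact h2
  · have hhead : ∀ j ∈ range (N - i + 1),
        c j * (M j - if j = i then 1 else 0) = c j * M j := by
      intro j hj
      rw [if_neg (by have := mem_range.1 hj; omega), Nat.sub_zero]
    have htail : ∑ j ∈ Ico (N - i + 1) (N + 1), c j * M j = c i := by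
      rw [Finset.sum_eq_single_of_mem i (mem_Ico.2 ⟨by omega, by omega⟩)
        (fun j hj hne => by rw [hA j (mem_Ico.1 hj).1 hne, Nat.mul_zero]),
        hB (by omega), Nat.mul_one]
    rw [Finset.sum_congr rfl hhead, hsplit, htail]

lemma unshift_sum (c : ℕ → ℕ) (N i : ℕ) (hi1 : 1 ≤ i) (hiN : i ≤ N) (M' : ℕ → ℕ)
    (hM' : ∀ j, N - i + 1 ≤ j → M' j = 0) :
    ∑ j ∈ range (N + 1), c j * (M' j + if j = i then 1 else 0)
      = ∑ j ∈ range (N - i + 1), c j * M' j + c i := by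
  have h1 : ∀ j ∈ range (N + 1),
      c j * (M' j + if j = i then 1 else 0) = c j * M' j + (if j = i then c j else 0) := by
    intro j hj
    by_cases h : j = i <;> simp [h, Nat.mul_add]
  rw [Finset.sum_congr rfl h1, Finset.sum_add_distrib,
    Finset.sum_ite_eq' (range (N + 1)) i c, if_pos (mem_range.2 (by omega))]
  congr 1
  have hsplit : ∑ j ∈ range (N + 1), c j * M' j
      = ∑ j ∈ range (N - i + 1), c j * M' j + ∑ j ∈ Ico (N - i + 1) (N + 1), c j * M' j := by
    simp only [range_eq_Ico]
    exact (Finset.sum_Ico_consecutive _ (Nat.zero_le _) (by omega)).symm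
  have htail : ∑ j ∈ Ico (N - i + 1) (N + 1), c j * M' j = 0 :=
    Finset.sum_eq_zero fun j hj => by rw [hM' j (mem_Ico.1 hj).1, Nat.mul_zero]
  rw [hsplit, htail, add_zero]

lemma shift_prod (a : ℕ → ℝ) (N i : ℕ) (hi1 : 1 ≤ i) (hiN : i ≤ N) (M : ℕ → ℕ)
    (hMi : 1 ≤ M i) (hA : ∀ j, N - i + 1 ≤ j → j ≠ i → M j = 0)
    (hB : N - i < i → M i = 1) :
    (M i : ℝ) * ∏ j ∈ range (N + 1), a j ^ M j / (Nat.factorial (M j) : ℝ)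
      = a i * ∏ j ∈ range (N - i + 1),
          a j ^ (M j - if j = i then 1 else 0) /
            (Nat.factorial (M j - if j = i then 1 else 0) : ℝ) := by
  have hsplit : ∏ j ∈ range (N + 1), a j ^ M j / (Nat.factorial (M j) : ℝ)
      = (∏ j ∈ range (N - i + 1), a j ^ M j / (Nat.factorial (M j) : ℝ)) *
        ∏ j ∈ Ico (N - i + 1) (N + 1), a j ^ M j / (Nat.factorial (M j) : ℝ) := by
    simp only [range_eq_Ico]
    exact (Finset.prod_Ico_consecutive _ (Nat.zero_le _) (by omega)).symm
  have hcore : (M i : ℝ) * (a i ^ M i / (Nat.factorial (M i) : ℝ))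
      = a i * (a i ^ (M i - 1) / (Nat.factorial (M i - 1) : ℝ)) := by
    obtain ⟨y, hy⟩ : ∃ y, M i = y + 1 := ⟨M i - 1, by omega⟩
    rw [hy]
    simp only [Nat.add_sub_cancel, Nat.factorial_succ, pow_succ]
    have h0 : (Nat.factorial y : ℝ) ≠ 0 := Nat.cast_ne_zero.2 (Nat.factorial_ne_zero y)
    field_simp
    push_cast
    ring
  by_cases hcase : i ≤ N - i
  · have htail : ∏ j ∈ Ico (N - i + 1) (N + 1), a j ^ M j / (Nat.factorial (M j) : ℝ) = 1 :=
      Finset.prod_eq_one fun j hj => by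
        rw [hA j (mem_Ico.1 hj).1 (by have := (mem_Ico.1 hj).1; omega)]
        simp
    have hmem : i ∈ range (N - i + 1) := mem_range.2 (by omega)
    rw [hsplit, htail, mul_one,
      ← Finset.mul_prod_erase (range (N - i + 1)) _ hmem,
      ← Finset.mul_prod_erase (range (N - i + 1)) _ hmem]
    have herase : ∏ j ∈ (range (N - i + 1)).erase i,
        a j ^ (M j - if j = i then 1 else 0) /
          (Nat.factorial (M j - if j = i then 1 else 0) : ℝ)
        = ∏ j ∈ (range (N - i + 1)).erase i, a j ^ M j / (Nat.factorial (M j) : ℝ) :=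
      Finset.prod_congr rfl fun j hj => by
        rw [if_neg (mem_erase.1 hj).1, Nat.sub_zero]
    rw [herase, if_pos rfl, ← mul_assoc, ← mul_assoc, hcore]
  · have htail : ∏ j ∈ Ico (N - i + 1) (N + 1), a j ^ M j / (Nat.factorial (M j) : ℝ) = a i := by
      rw [Finset.prod_eq_single_of_mem i (mem_Ico.2 ⟨by omega, by omega⟩)
        (fun j hj hne => by rw [hA j (mem_Ico.1 hj).1 hne]; simp), hB (by omega)]
      simp
    have hhead : ∏ j ∈ range (N - i + 1),
        a j ^ (M j - if j = i then 1 else 0) /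
          (Nat.factorial (M j - if j = i then 1 else 0) : ℝ)
        = ∏ j ∈ range (N - i + 1), a j ^ M j / (Nat.factorial (M j) : ℝ) :=
      Finset.prod_congr rfl fun j hj => by
        rw [if_neg (by have := mem_range.1 hj; omega), Nat.sub_zero]
    rw [hsplit, htail, hhead, hB (by omega)]
    push_cast
    ring

lemma PNK_zero_empty {N K : ℕ} (hN : 1 ≤ N) (hK : K = 0) : PNK N K = ∅ := by
  subst hK
  rw [Finset.eq_empty_iff_forall_notMem]
  intro m hm
  obtain ⟨-, -, hs1, hs2⟩ := mem_PNK_iff.1 hm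
  have hz : ∀ j ∈ range (N + 1), extn N m j = 0 :=
    fun j hj => (Finset.sum_eq_zero_iff.1 hs2) j hj
  rw [Finset.sum_congr rfl (fun j hj => by rw [hz j hj, Nat.mul_zero])] at hs1
  simp at hs1
  omega

lemma key_sum (a : ℕ → ℝ) (N K i : ℕ) (hi1 : 1 ≤ i) (hiN : i ≤ N) (hK : 1 ≤ K) :
    ∑ m ∈ PNK N K, (m ⟨i, Nat.lt_succ_of_le hiN⟩ : ℝ) *
        ∏ j, a j.1 ^ m j / (Nat.factorial (m j) : ℝ)
      = a i * CNK a (N - i) (K - 1) := by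
  set I : Fin (N + 1) := ⟨i, Nat.lt_succ_of_le hiN⟩ with hI
  have hle : N - i + 1 ≤ N + 1 := by omega
  set f : (Fin (N + 1) → ℕ) → (Fin (N - i + 1) → ℕ) :=
    fun m j => m (Fin.castLE hle j) - (if j.1 = i then 1 else 0) with hf
  set g : (Fin (N - i + 1) → ℕ) → (Fin (N + 1) → ℕ) :=
    fun m' j => (if h : j.1 < N - i + 1 then m' ⟨j.1, h⟩ else 0) +
      (if j.1 = i then 1 else 0) with hg
  set S : Finset (Fin (N + 1) → ℕ) := (PNK N K).filter (fun m => m I ≠ 0) with hS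
  -- key facts about members of S
  have facts : ∀ m ∈ S, 1 ≤ extn N m i ∧
      (∀ j, N - i + 1 ≤ j → j ≠ i → extn N m j = 0) ∧
      (N - i < i → extn N m i = 1) := by
    intro m hm
    rw [hS, mem_filter] at hm
    obtain ⟨hmem, hne⟩ := hm
    obtain ⟨hbd, h0, hs1, hs2⟩ := mem_PNK_iff.1 hmem
    have hiN1 : i < N + 1 := by omega
    have hMi : 1 ≤ extn N m i := by
      rw [extn_lt m hiN1]
      exact Nat.one_le_iff_ne_zero.2 hne
    have hsingle : i * extn N m i ≤ N := by
      calc i * extn N m i ≤ ∑ k ∈ range (N + 1), k * extn N m k :=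
            Finset.single_le_sum (f := fun k => k * extn N m k)
              (fun k _ => Nat.zero_le _) (mem_range.2 hiN1)
        _ = N := hs1
    refine ⟨hMi, ?_, ?_⟩
    · intro j hj hne'
      by_cases hjN : j < N + 1
      · by_contra h0'
        have h1 : 1 ≤ extn N m j := Nat.one_le_iff_ne_zero.2 h0'
        have hpair : i * extn N m i + j * extn N m j ≤ N := by
          have hsub : ({i, j} : Finset ℕ) ⊆ range (N + 1) := by
            intro x hx
            simp only [Finset.mem_insert, Finset.mem_singleton] at hx
            rcases hx with rfl | rfl <;> exact mem_range.2 (by omega)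
          calc i * extn N m i + j * extn N m j
              = ∑ k ∈ ({i, j} : Finset ℕ), k * extn N m k :=
                (Finset.sum_pair (f := fun k => k * extn N m k) (fun h => hne' h.symm)).symm
            _ ≤ ∑ k ∈ range (N + 1), k * extn N m k :=
                Finset.sum_le_sum_of_subset hsub
            _ = N := hs1
        have h4 : i ≤ i * extn N m i := Nat.le_mul_of_pos_right _ (by omega)
        have h5 : j ≤ j * extn N m j := Nat.le_mul_of_pos_right _ (by omega)
        omega
      · exact extn_ge m hjN
    · intro hcase
      by_contra h0'
      have h2 : 2 ≤ extn N m i := by omega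
      have h3 : i * 2 ≤ i * extn N m i := Nat.mul_le_mul_left i h2
      omega
  -- unconditional description of extn of (f m)
  have hext_f : ∀ (m : Fin (N + 1) → ℕ), ∀ j ∈ range (N - i + 1),
      extn (N - i) (f m) j = extn N m j - (if j = i then 1 else 0) := by
    intro m j hj
    have hj' := mem_range.1 hj
    rw [extn_lt (f m) hj', extn_lt m (by omega)]
    rfl
  rw [CNK, Finset.mul_sum]
  rw [← Finset.sum_filter_of_ne (s := PNK N K) (p := fun m => m I ≠ 0)
    (fun m hm hne h0 => hne (by rw [h0]; simp)), ← hS]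
  refine Finset.sum_nbij' f g ?_ ?_ ?_ ?_ ?_
  · -- f maps S into PNK (N-i) (K-1)
    intro m hm
    obtain ⟨hMi, hA, hB⟩ := facts m hm
    rw [hS, mem_filter] at hm
    obtain ⟨hbd, h0, hs1, hs2⟩ := mem_PNK_iff.1 hm.1
    have hsum1 : ∑ j ∈ range (N - i + 1), j * extn (N - i) (f m) j = N - i := by
      rw [Finset.sum_congr rfl (fun j hj => by rw [hext_f m j hj])]
      have h6 : (∑ j ∈ range (N - i + 1), j * (extn N m j - if j = i then 1 else 0)) + i
          = ∑ j ∈ range (N + 1), j * extn N m j :=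
        shift_sum (fun j => j) N i hi1 hiN (extn N m) hMi hA hB
      omega
    have hsum2 : ∑ j ∈ range (N - i + 1), extn (N - i) (f m) j = K - 1 := by
      rw [Finset.sum_congr rfl (fun j hj => by rw [hext_f m j hj])]
      have h6 : (∑ j ∈ range (N - i + 1), 1 * (extn N m j - if j = i then 1 else 0)) + 1
          = ∑ j ∈ range (N + 1), 1 * extn N m j :=
        shift_sum (fun _ => 1) N i hi1 hiN (extn N m) hMi hA hB
      simp only [one_mul] at h6
      omega
    rw [mem_PNK_iff]
    refine ⟨?_, ?_, hsum1, hsum2⟩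
    · intro j
      rcases Nat.eq_zero_or_pos j.1 with hj0 | hj0
      · have hcast : Fin.castLE hle j = 0 := Fin.ext (by simp [hj0])
        have : f m j = 0 := by
          rw [hf]
          simp only [hcast, h0, if_neg (show ¬ j.1 = i by omega)]
        omega
      · have h7 : j.1 * extn (N - i) (f m) j.1 ≤ N - i := by
          calc j.1 * extn (N - i) (f m) j.1
              ≤ ∑ k ∈ range (N - i + 1), k * extn (N - i) (f m) k :=
                Finset.single_le_sum (f := fun k => k * extn (N - i) (f m) k)
                  (fun k _ => Nat.zero_le _) (mem_range.2 j.2)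
            _ = N - i := hsum1
        have h8 : extn (N - i) (f m) j.1 = f m j := extn_fin (f m) j
        have h9 : f m j ≤ j.1 * extn (N - i) (f m) j.1 := by
          rw [h8]; exact Nat.le_mul_of_pos_left _ hj0
        omega
    · have hcast : Fin.castLE hle (0 : Fin (N - i + 1)) = 0 := Fin.ext (by simp)
      rw [hf]
      simp only [hcast, h0, if_neg (show ¬ (0 : Fin (N - i + 1)).1 = i by simp; omega)]
  · -- g maps PNK (N-i) (K-1) into S
    intro m' hm'
    obtain ⟨hbd', h0', hs1', hs2'⟩ := mem_PNK_iff.1 hm'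
    have hMz : ∀ j, N - i + 1 ≤ j → extn (N - i) m' j = 0 :=
      fun j hj => extn_ge m' (by omega)
    have hext : ∀ j ∈ range (N + 1),
        extn N (g m') j = extn (N - i) m' j + (if j = i then 1 else 0) := by
      intro j hj
      have hj' := mem_range.1 hj
      rw [extn_lt (g m') hj', hg]
      by_cases h2 : j < N - i + 1
      · rw [extn_lt m' h2]
        simp only [dif_pos h2]
      · rw [extn_ge m' h2]
        simp only [dif_neg h2]
    have hsum1 : ∑ j ∈ range (N + 1), j * extn N (g m') j = N := by
      have h6 : ∑ j ∈ range (N + 1), j * (extn (N - i) m' j + if j = i then 1 else 0)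
          = (∑ j ∈ range (N - i + 1), j * extn (N - i) m' j) + i :=
        unshift_sum (fun j => j) N i hi1 hiN (extn (N - i) m') hMz
      rw [Finset.sum_congr rfl (fun j hj => by rw [hext j hj]), h6, hs1']
      omega
    have hsum2 : ∑ j ∈ range (N + 1), extn N (g m') j = K := by
      have h6 : ∑ j ∈ range (N + 1), 1 * (extn (N - i) m' j + if j = i then 1 else 0)
          = (∑ j ∈ range (N - i + 1), 1 * extn (N - i) m' j) + 1 :=
        unshift_sum (fun _ => 1) N i hi1 hiN (extn (N - i) m') hMz
      simp only [one_mul] at h6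
      rw [Finset.sum_congr rfl (fun j hj => by rw [hext j hj]), h6, hs2']
      omega
    rw [hS, mem_filter]
    constructor
    · rw [mem_PNK_iff]
      refine ⟨?_, ?_, hsum1, hsum2⟩
      · intro j
        rcases Nat.eq_zero_or_pos j.1 with hj0 | hj0
        · have : g m' j = 0 := by
            rw [hg]
            simp only [hj0]
            rw [dif_pos (show (0:ℕ) < N - i + 1 by omega), if_neg (show ¬ (0:ℕ) = i by omega)]
            have : (⟨(0:ℕ), show (0:ℕ) < N - i + 1 by omega⟩ : Fin (N - i + 1)) = 0 :=
              Fin.ext (by simp)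
            rw [this, h0']
          omega
        · have h7 : j.1 * extn N (g m') j.1 ≤ N := by
            calc j.1 * extn N (g m') j.1
                ≤ ∑ k ∈ range (N + 1), k * extn N (g m') k :=
                  Finset.single_le_sum (f := fun k => k * extn N (g m') k)
                    (fun k _ => Nat.zero_le _) (mem_range.2 j.2)
              _ = N := hsum1
          have h8 : extn N (g m') j.1 = g m' j := extn_fin (g m') j
          have h9 : g m' j ≤ j.1 * extn N (g m') j.1 := by
            rw [h8]; exact Nat.le_mul_of_pos_left _ hj0
          omega
      · rw [hg]
        beta_reduce
        rw [dif_pos (show ((0 : Fin (N + 1)) : ℕ) < N - i + 1 by simp),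
          if_neg (show ¬ ((0 : Fin (N + 1)) : ℕ) = i by simp; omega)]
        have : (⟨((0 : Fin (N + 1)) : ℕ), show ((0 : Fin (N + 1)) : ℕ) < N - i + 1 by simp⟩ :
            Fin (N - i + 1)) = 0 :=
          Fin.ext (by simp)
        rw [this, h0']
    · intro hcontra
      rw [hg] at hcontra
      simp only at hcontra
      rw [if_pos (show (I : ℕ) = i from rfl)] at hcontra
      omega
  · -- left inverse
    intro m hm
    obtain ⟨hMi, hA, hB⟩ := facts m hm
    funext j
    rw [hg, hf]
    simp only
    by_cases hj : j.1 < N - i + 1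
    · rw [dif_pos hj]
      have hcast : Fin.castLE hle ⟨j.1, hj⟩ = j := Fin.ext rfl
      rw [hcast]
      by_cases hji : j.1 = i
      · have h2 : 1 ≤ m j := by
          have := hMi
          rw [extn_lt m (by omega : i < N + 1)] at this
          have hjI : j = I := Fin.ext hji
          rw [hjI]
          exact this
        simp only [if_pos hji]
        omega
      · simp only [if_neg hji]; omega
    · rw [dif_neg hj]
      by_cases hji : j.1 = i
      · have hjI : j = I := Fin.ext hji
        have h2 : extn N m i = 1 := hB (by omega)
        rw [extn_lt m (by omega : i < N + 1)] at h2
        have h4 : m j = 1 := by rw [hjI]; exact h2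
        simp only [if_pos hji, h4]
      · have h2 : extn N m j.1 = 0 := hA j.1 (by omega) hji
        rw [extn_fin m j] at h2
        simp only [if_neg hji, h2]
  · -- right inverse
    intro m' hm'
    funext j
    rw [hf, hg]
    simp only
    have hcast : (Fin.castLE hle j).1 = j.1 := rfl
    rw [hcast, dif_pos j.2]
    have : (⟨j.1, j.2⟩ : Fin (N - i + 1)) = j := Fin.ext rfl
    rw [this]
    by_cases hji : j.1 = i
    · simp only [if_pos hji]; omega
    · simp only [if_neg hji]; omega
  · -- term equality
    intro m hm
    obtain ⟨hMi, hA, hB⟩ := facts m hm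
    rw [prod_extn m (fun j c => a j ^ c / (Nat.factorial c : ℝ)),
      prod_extn (f m) (fun j c => a j ^ c / (Nat.factorial c : ℝ))]
    have hmI : (m I : ℝ) = ((extn N m i : ℕ) : ℝ) := by
      rw [extn_lt m (by omega : i < N + 1)]
    have hR : ∏ j ∈ range (N - i + 1),
        a j ^ extn (N - i) (f m) j / (Nat.factorial (extn (N - i) (f m) j) : ℝ)
        = ∏ j ∈ range (N - i + 1),
          a j ^ (extn N m j - if j = i then 1 else 0) /
            (Nat.factorial (extn N m j - if j = i then 1 else 0) : ℝ) :=
      Finset.prod_congr rfl fun j hj => by rw [hext_f m j hj]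
    rw [hmI, hR]
    exact shift_prod a N i hi1 hiN (extn N m) hMi hA hB

/-- The mean number of clusters of size `i` under `p'(·|K)` equals
`a_i · C_{N-i,K-1} / C_{N,K}`. -/
theorem mean_clusters_of_size (a : ℕ → ℝ) (N K i : ℕ) (hi1 : 1 ≤ i) (hiN : i ≤ N)
    (hC : CNK a N K ≠ 0) :
    ∑ m ∈ PNK N K, (m ⟨i, Nat.lt_succ_of_le hiN⟩ : ℝ) *
        ((∏ j, a j.1 ^ m j / (Nat.factorial (m j) : ℝ)) / CNK a N K)
      = a i * CNK a (N - i) (K - 1) / CNK a N K := by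
  have hK : 1 ≤ K := by
    rcases Nat.eq_zero_or_pos K with h | h
    · exfalso; apply hC; rw [CNK, PNK_zero_empty (le_trans hi1 hiN) h, Finset.sum_empty]
    · exact h
  simp_rw [mul_div_assoc']
  rw [← Finset.sum_div, key_sum a N K i hi1 hiN hK]
end

section
/- For integers N ≥ K ≥ 2, Σ_{j=1}^{N−K+1} j²·(N−j−1)!/(N−j−K+1)! = [N!/(N−K)!]·(2N−K+1)/[(K−1)·K·(K+1)]. -/
open Finset

lemma vander (r : ℕ) : ∀ n s : ℕ, ∑ j ∈ range (n+1), (j.choose r) * ((n-j).choose s)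
    = (n+1).choose (r+s+1) := by
  intro n
  induction n with
  | zero =>
    intro s
    cases r <;> cases s <;> simp [Nat.choose]
  | succ n ih =>
    intro s
    rw [Finset.sum_range_succ]
    have hstep : ∀ j ∈ range (n+1), (j.choose r) * ((n+1-j).choose s)
        = (j.choose r) * (((n-j)+1).choose s) := by
      intro j hj
      simp only [mem_range] at hj
      congr 2
      omega
    rw [Finset.sum_congr rfl hstep]
    cases s with
    | zero =>
      simp only [Nat.choose_zero_right, Nat.sub_self, mul_one]
      have h := ih 0
      simp only [Nat.choose_zero_right, mul_one] at h
      rw [h]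
      have := Nat.choose_succ_succ (n+1) (r+0)
      simp only [Nat.succ_eq_add_one, Nat.add_zero] at this ⊢
      omega
    | succ t =>
      have hsplit : ∀ j ∈ range (n+1), (j.choose r) * (((n-j)+1).choose (t+1))
          = j.choose r * ((n-j).choose t) + j.choose r * ((n-j).choose (t+1)) := by
        intro j _
        rw [Nat.choose_succ_succ, Nat.mul_add]
      rw [Finset.sum_congr rfl hsplit, Finset.sum_add_distrib, ih t, ih (t+1)]
      rw [Nat.sub_self]
      have h0 : Nat.choose 0 (t+1) = 0 := by simp
      rw [h0, mul_zero, add_zero]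
      have := Nat.choose_succ_succ (n+1) (r+t+1)
      simp only [Nat.succ_eq_add_one] at this
      have e2 : r + (t+1) = r + t + 1 := by omega
      rw [e2]
      omega

lemma two_choose_sq (j : ℕ) : 2 * j.choose 2 + j = j ^ 2 := by
  induction j with
  | zero => simp
  | succ n ih =>
    have h := Nat.choose_succ_succ n 1
    norm_num at h
    rw [h]
    have e : (n+1)^2 = n^2 + 2*n + 1 := by ring
    omega

/-- `Σ_{j=1}^{N−K+1} j²·(N−j−1)!/(N−j−K+1)! = [N!/(N−K)!]·(2N−K+1)/[(K−1)·K·(K+1)]`. -/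
theorem sum_sq_falling_factorial (N K : ℕ) (hK : 2 ≤ K) (hKN : K ≤ N) :
    ∑ j ∈ Finset.Icc 1 (N - K + 1),
        (j : ℝ) ^ 2 * (Nat.factorial (N - j - 1) : ℝ) / (Nat.factorial (N - j - K + 1) : ℝ)
      = (Nat.factorial N : ℝ) / (Nat.factorial (N - K) : ℝ)
          * (2 * (N : ℝ) - K + 1) / (((K : ℝ) - 1) * K * (K + 1)) := by
  obtain ⟨m, rfl⟩ : ∃ m, K = m + 2 := ⟨K - 2, by omega⟩
  obtain ⟨d, rfl⟩ : ∃ d, N = m + 2 + d := ⟨N - (m+2), by omega⟩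
  clear hK hKN
  -- Step 1: termwise rewrite
  have hterm : ∀ j ∈ Icc 1 (m + 2 + d - (m+2) + 1),
      (j : ℝ) ^ 2 * (Nat.factorial (m + 2 + d - j - 1) : ℝ)
          / (Nat.factorial (m + 2 + d - j - (m+2) + 1) : ℝ)
      = (((2 * j.choose 2 + j) * ((m + 2 + d - 1 - j).choose m) : ℕ) : ℝ)
          * (Nat.factorial m : ℝ) := by
    intro j hj
    simp only [mem_Icc] at hj
    have hle : m ≤ m + 2 + d - j - 1 := by omega
    have hfac := Nat.choose_mul_factorial_mul_factorial hle
    have he : Nat.factorial (m + 2 + d - j - 1 - m)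
        = Nat.factorial (m + 2 + d - j - (m+2) + 1) := by
      rcases Nat.lt_or_ge j (d+1) with h | h
      · congr 1
        omega
      · have hj1 : j = d + 1 := by omega
        subst hj1
        rw [show m + 2 + d - (d+1) - 1 - m = 0 from by omega,
          show m + 2 + d - (d+1) - (m+2) + 1 = 1 from by omega]
        rfl
    rw [he] at hfac
    have hpos : (0:ℝ) < (Nat.factorial (m + 2 + d - j - (m+2) + 1) : ℝ) := by
      exact_mod_cast Nat.factorial_pos _
    have he2 : m + 2 + d - 1 - j = m + 2 + d - j - 1 := by omega
    rw [div_eq_iff hpos.ne', he2]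
    have hfacR : ((m + 2 + d - j - 1).factorial : ℝ)
        = ((m + 2 + d - j - 1).choose m : ℝ) * (Nat.factorial m : ℝ)
            * (Nat.factorial (m + 2 + d - j - (m+2) + 1) : ℝ) := by
      exact_mod_cast hfac.symm
    rw [hfacR]
    have hsq : ((2 * j.choose 2 + j : ℕ) : ℝ) = (j:ℝ)^2 := by
      exact_mod_cast congrArg (Nat.cast (R := ℝ)) (two_choose_sq j)
    push_cast
    push_cast at hsq
    nlinarith [hsq]
  rw [Finset.sum_congr rfl hterm, ← Finset.sum_mul, ← Nat.cast_sum]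
  -- Step 2: evaluate the natural-number sum
  have hsum : ∑ j ∈ Icc 1 (m + 2 + d - (m+2) + 1),
      (2 * j.choose 2 + j) * ((m + 2 + d - 1 - j).choose m)
      = 2 * (m + 2 + d).choose (m+3) + (m + 2 + d).choose (m+2) := by
    have hsub : Icc 1 (m + 2 + d - (m+2) + 1) ⊆ range (m + 2 + d) := by
      intro j hj
      simp only [mem_Icc] at hj
      simp only [mem_range]
      omega
    have hzero : ∀ j ∈ range (m + 2 + d), j ∉ Icc 1 (m + 2 + d - (m+2) + 1) →
        (2 * j.choose 2 + j) * ((m + 2 + d - 1 - j).choose m) = 0 := by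
      intro j hj hj'
      simp only [mem_range] at hj
      simp only [mem_Icc, not_and_or, not_le] at hj'
      rcases hj' with h | h
      · have : j = 0 := by omega
        subst this
        simp
      · have : m + 2 + d - 1 - j < m := by omega
        rw [Nat.choose_eq_zero_of_lt this, mul_zero]
    rw [Finset.sum_subset hsub hzero]
    rw [show m + 2 + d = (m + 1 + d) + 1 from by omega]
    have expand : ∀ j ∈ range ((m + 1 + d)+1),
        (2 * j.choose 2 + j) * ((m + 1 + d + 1 - 1 - j).choose m)
        = 2 * (j.choose 2 * ((m + 1 + d - j).choose m))
          + j.choose 1 * ((m + 1 + d - j).choose m) := by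
      intro j _
      rw [Nat.choose_one_right, show m + 1 + d + 1 - 1 - j = m + 1 + d - j from by omega]
      ring
    rw [Finset.sum_congr rfl expand, Finset.sum_add_distrib, ← Finset.mul_sum,
      vander 2 (m+1+d) m, vander 1 (m+1+d) m]
    rw [show 2 + m + 1 = m + 3 from by omega, show 1 + m + 1 = m + 2 from by omega,
      show m + 1 + d + 1 = m + 2 + d from by omega]
  rw [hsum]
  -- Step 3: closed-form arithmetic
  have hA : ((m + 2 + d).choose (m+2) : ℝ) * (Nat.factorial (m+2) : ℝ) * (Nat.factorial d : ℝ)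
      = (Nat.factorial (m + 2 + d) : ℝ) := by
    have h := Nat.choose_mul_factorial_mul_factorial (show m + 2 ≤ m + 2 + d by omega)
    rw [show m + 2 + d - (m+2) = d from by omega] at h
    exact_mod_cast h
  have hB : ((m + 2 + d).choose (m+3) : ℝ) * (Nat.factorial (m+3) : ℝ) * (Nat.factorial d : ℝ)
      = (d : ℝ) * (Nat.factorial (m + 2 + d) : ℝ) := by
    rcases Nat.eq_zero_or_pos d with hd0 | hd0
    · subst hd0
      have h0 : (m + 2 + 0).choose (m+3) = 0 := Nat.choose_eq_zero_of_lt (by omega)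
      rw [h0]
      push_cast
      ring
    · have h1 := Nat.choose_mul_factorial_mul_factorial (show m + 3 ≤ m + 2 + d by omega)
      rw [show m + 2 + d - (m+3) = d - 1 from by omega] at h1
      have h2 : Nat.factorial d = d * Nat.factorial (d-1) := by
        rw [show d = (d-1)+1 from by omega, Nat.factorial_succ]
        simp
      rw [h2]
      have h1R : ((m + 2 + d).choose (m+3) : ℝ) * (Nat.factorial (m+3) : ℝ)
          * (Nat.factorial (d-1) : ℝ) = (Nat.factorial (m + 2 + d) : ℝ) := by
        exact_mod_cast h1
      push_cast
      nlinarith [h1R]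
  have hf2 : (Nat.factorial (m+2) : ℝ) = ((m:ℝ)+2) * ((m:ℝ)+1) * (Nat.factorial m : ℝ) := by
    rw [show m + 2 = (m+1)+1 from rfl, Nat.factorial_succ, Nat.factorial_succ]
    push_cast
    ring
  have hf3 : (Nat.factorial (m+3) : ℝ)
      = ((m:ℝ)+3) * ((m:ℝ)+2) * ((m:ℝ)+1) * (Nat.factorial m : ℝ) := by
    rw [show m + 3 = ((m+1)+1)+1 from rfl, Nat.factorial_succ, Nat.factorial_succ,
      Nat.factorial_succ]
    push_cast
    ring
  rw [hf2] at hA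
  rw [hf3] at hB
  rw [show m + 2 + d - (m+2) = d from by omega]
  have hne : (Nat.factorial d : ℝ)
      * ((((m+2 : ℕ):ℝ) - 1) * ((m+2 : ℕ):ℝ) * (((m+2 : ℕ):ℝ) + 1)) ≠ 0 := by
    have hd : (0:ℝ) < (Nat.factorial d : ℝ) := by exact_mod_cast Nat.factorial_pos d
    have h2 : (((m+2 : ℕ):ℝ) - 1) * ((m+2 : ℕ):ℝ) * (((m+2 : ℕ):ℝ) + 1) > 0 := by
      push_cast
      rw [show ((m:ℝ)+2) - 1 = (m:ℝ)+1 from by ring]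
      positivity
    exact mul_ne_zero hd.ne' h2.ne'
  rw [div_mul_eq_mul_div, div_div, eq_div_iff hne]
  push_cast
  linear_combination (2:ℝ) * hB + ((m:ℝ)+3) * hA
end

section
/- Let a > 0, N ≥ 1, and define ₁F₁(−N+1; 2; z) = Σ_{n=0}^{N−1} ((−N+1)_n/(2)_n)·zⁿ/n! (a polynomial since the series terminates). With Π_{K+1} = (2a)^K·(N−1)!/[K!·(K+1)!·(N−K−1)!]·Π_1 for 0 ≤ K ≤ N−1 and Σ_{K=1}^N Π_K = 1, one has Π_1 = 1/₁F₁(−N+1; 2; −2a). -/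
open Finset

lemma asc_two_eval (n : ℕ) : (ascPochhammer ℝ n).eval 2 = (Nat.factorial (n+1) : ℝ) := by
  induction n with
  | zero => simp
  | succ n ih =>
      rw [ascPochhammer_succ_eval, ih, Nat.factorial_succ (n+1)]
      push_cast; ring

lemma asc_neg_eval (N n : ℕ) (hN : 1 ≤ N) (h : n ≤ N - 1) :
    (ascPochhammer ℝ n).eval (-(N:ℝ)+1) * (Nat.factorial (N-1-n) : ℝ)
      = (-1)^n * (Nat.factorial (N-1) : ℝ) := by
  induction n with
  | zero => simp
  | succ n ih =>
      have hn : n ≤ N - 1 := le_of_lt (lt_of_lt_of_le (Nat.lt_succ_self n) h)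
      have ihn := ih hn
      have hfac : (N - 1 - n) = (N - 1 - (n+1)) + 1 := by omega
      have hcast : ((N - 1 - n : ℕ) : ℝ) = (N:ℝ) - 1 - n := by
        have : (N - 1 - n) + (1 + n) = N := by omega
        have := congrArg (fun k : ℕ => (k : ℝ)) this
        push_cast at this; linarith
      rw [ascPochhammer_succ_eval]
      have hL : (ascPochhammer ℝ n).eval (-(N:ℝ)+1) * ((-(N:ℝ)+1) + n)
            * (Nat.factorial (N-1-(n+1)) : ℝ)
          = (-1)^(n+1) * (Nat.factorial (N-1) : ℝ) := by
        have hfac' : (Nat.factorial (N-1-n) : ℝ)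
            = ((N-1-(n+1) : ℕ) + 1 : ℝ) * (Nat.factorial (N-1-(n+1)) : ℝ) := by
          rw [hfac]; push_cast [Nat.factorial_succ]; ring
        have hc2 : ((N - 1 - (n+1) : ℕ) : ℝ) + 1 = (N:ℝ) - 1 - n := by
          have : (N - 1 - (n+1)) + (1 + (n+1)) = N := by omega
          have := congrArg (fun k : ℕ => (k : ℝ)) this
          push_cast at this; linarith
        have key : (-(N:ℝ)+1) + n = -(((N - 1 - (n+1) : ℕ) : ℝ) + 1) := by
          rw [hc2]; ring
        calc (ascPochhammer ℝ n).eval (-(N:ℝ)+1) * ((-(N:ℝ)+1) + n)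
              * (Nat.factorial (N-1-(n+1)) : ℝ)
            = -((ascPochhammer ℝ n).eval (-(N:ℝ)+1)
                * ((((N - 1 - (n+1) : ℕ) : ℝ) + 1) * (Nat.factorial (N-1-(n+1)) : ℝ))) := by
              rw [key]; ring
          _ = -((ascPochhammer ℝ n).eval (-(N:ℝ)+1) * (Nat.factorial (N-1-n) : ℝ)) := by
              rw [hfac']
          _ = (-1)^(n+1) * (Nat.factorial (N-1) : ℝ) := by rw [ihn]; ring
      exact hL

/-- With `Π_{K+1} = (2a)^K·(N−1)!/[K!·(K+1)!·(N−K−1)!]·Π_1` and `Σ_{K=1}^N Π_K = 1`,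
one has `Π_1 = 1/₁F₁(−N+1; 2; −2a)`, where the terminating Kummer function is
`₁F₁(−N+1;2;z) = Σ_{n=0}^{N−1} ((−N+1)_n/(2)_n)·zⁿ/n!`. -/
theorem prob_one_cluster_kummer (N : ℕ) (hN : 1 ≤ N) (a : ℝ) (ha : 0 < a) (P : ℕ → ℝ)
    (hP : ∀ K ≤ N - 1,
      P (K + 1) = (2 * a) ^ K * (Nat.factorial (N - 1) : ℝ)
        / ((Nat.factorial K : ℝ) * (Nat.factorial (K + 1) : ℝ)
            * (Nat.factorial (N - K - 1) : ℝ)) * P 1)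
    (hsum : ∑ K ∈ Finset.Icc 1 N, P K = 1) :
    P 1 = 1 / (∑ n ∈ Finset.range N,
      (Polynomial.eval (-(N : ℝ) + 1) (ascPochhammer ℝ n))
        / (Polynomial.eval (2 : ℝ) (ascPochhammer ℝ n))
        * (-2 * a) ^ n / (Nat.factorial n : ℝ)) := by
  set c : ℕ → ℝ := fun K => (2 * a) ^ K * (Nat.factorial (N - 1) : ℝ)
        / ((Nat.factorial K : ℝ) * (Nat.factorial (K + 1) : ℝ)
            * (Nat.factorial (N - K - 1) : ℝ)) with hc
  -- each term of the Kummer sum equals c n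
  have hterm : ∀ n ∈ Finset.range N,
      (Polynomial.eval (-(N : ℝ) + 1) (ascPochhammer ℝ n))
        / (Polynomial.eval (2 : ℝ) (ascPochhammer ℝ n))
        * (-2 * a) ^ n / (Nat.factorial n : ℝ) = c n := by
    intro n hn
    rw [Finset.mem_range] at hn
    have hn' : n ≤ N - 1 := by omega
    have hA := asc_neg_eval N n hN hn'
    have hA' : (ascPochhammer ℝ n).eval (-(N:ℝ)+1)
        = (-1)^n * (Nat.factorial (N-1) : ℝ) / (Nat.factorial (N-1-n) : ℝ) := by
      field_simp
      linarith [hA]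
    have hz : N - n - 1 = N - 1 - n := by omega
    have hpow : (-2 * a) ^ n = (-1)^n * (2*a)^n := by
      rw [show (-2 * a : ℝ) = (-1) * (2*a) by ring, mul_pow]
    rw [hA', asc_two_eval, hc, hpow]
    simp only [hz]
    have h1 : (Nat.factorial (N-1-n) : ℝ) ≠ 0 := Nat.cast_ne_zero.mpr (Nat.factorial_ne_zero _)
    have h2 : (Nat.factorial (n+1) : ℝ) ≠ 0 := Nat.cast_ne_zero.mpr (Nat.factorial_ne_zero _)
    have h3 : (Nat.factorial n : ℝ) ≠ 0 := Nat.cast_ne_zero.mpr (Nat.factorial_ne_zero _)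
    field_simp
    ring_nf
    have hsq : (((-1:ℝ))^n)^2 = 1 := by
      rw [← pow_mul, mul_comm, pow_mul]
      norm_num
    simp [pow_mul, mul_comm, hsq]
  -- rewrite the sum
  have hsum2 : ∑ K ∈ Finset.Icc 1 N, P K = (∑ n ∈ Finset.range N, c n) * P 1 := by
    rw [show Finset.Icc 1 N = Finset.Ico 1 (N+1) by rw [Finset.Ico_add_one_right_eq_Icc],
      Finset.sum_Ico_eq_sum_range]
    simp only [Nat.add_sub_cancel]
    rw [Finset.sum_mul]
    apply Finset.sum_congr rfl
    intro n hn
    rw [Finset.mem_range] at hn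
    have := hP n (by omega)
    rw [add_comm 1 n, this]
  have hcpos : ∀ n ∈ Finset.range N, 0 < c n := by
    intro n _
    apply div_pos
    · positivity
    · have := Nat.factorial_pos n
      have := Nat.factorial_pos (n+1)
      have := Nat.factorial_pos (N - n - 1)
      positivity
  have hFpos : 0 < ∑ n ∈ Finset.range N, c n := by
    apply Finset.sum_pos hcpos
    exact ⟨0, Finset.mem_range.mpr (by omega)⟩
  rw [Finset.sum_congr rfl hterm]
  rw [hsum2] at hsum
  field_simp
  linarith [hsum]
end
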